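/- Let L > 0, K > 0, l > 0, β > 0, let κ, ň : [0, L] → ℝ be continuous with κ ≥ 0, and N₀ ∈ ℝ. Let ε, σ : [0, L] → ℝ be differentiable with ε(0) = σ(0) = 0, ε'(ξ) = −κ(ξ) σ(ξ), and σ'(ξ) = K l (ň(ξ) − N₀ + ň(ξ) ε(ξ)) on [0, L]. Define B(ξ) := |β K l ň(ξ) − κ(ξ)|/(2√β) and let A ≥ K l √β · sup_{ξ ∈ [0,L]} |ň(ξ) − N₀|. If A ∫₀^L exp(∫_η^L B(ζ) dζ) dη < 1, then 1 + ε(ξ) > 0 for all ξ ∈ [0, L]. -/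

import Mathlib

open MeasureTheory intervalIntegral Real Set

/-- Theorem 1 of the paper (no wave-breaking during the laser-plasma
interaction): if the Gronwall bound on `|ε|` at `ξ = L` is `< 1`, then the
Jacobian `J = 1 + ε` stays positive on `[0, L]`. -/
theorem no_wave_breaking
    (L K l β N₀ A : ℝ) (hL : 0 < L) (hK : 0 < K) (hl : 0 < l) (hβ : 0 < β)
    (κ nCheck : ℝ → ℝ)
    (hκ_cont : ContinuousOn κ (Set.Icc (0:ℝ) L))
    (hnCheck_cont : ContinuousOn nCheck (Set.Icc (0:ℝ) L))
    (hκ_nonneg : ∀ ξ ∈ Set.Icc (0:ℝ) L, 0 ≤ κ ξ)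
    (ε σ : ℝ → ℝ)
    (hε0 : ε 0 = 0) (hσ0 : σ 0 = 0)
    (hε' : ∀ ξ ∈ Set.Icc (0:ℝ) L, HasDerivAt ε (-(κ ξ) * σ ξ) ξ)
    (hσ' : ∀ ξ ∈ Set.Icc (0:ℝ) L,
      HasDerivAt σ (K * l * (nCheck ξ - N₀ + nCheck ξ * ε ξ)) ξ)
    (hA : ∀ ξ ∈ Set.Icc (0:ℝ) L, K * l * Real.sqrt β * |nCheck ξ - N₀| ≤ A)
    (hQ : A * (∫ η in (0:ℝ)..L,
        Real.exp (∫ ζ in η..L, |β * K * l * nCheck ζ - κ ζ| / (2 * Real.sqrt β))) < 1) :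
    ∀ ξ ∈ Set.Icc (0:ℝ) L, 0 < 1 + ε ξ := by
  have hsβ : 0 < Real.sqrt β := Real.sqrt_pos.mpr hβ
  set B : ℝ → ℝ := fun ζ => |β * K * l * nCheck ζ - κ ζ| / (2 * Real.sqrt β) with hBdef
  have hBnn : ∀ ζ, 0 ≤ B ζ := fun ζ => div_nonneg (abs_nonneg _) (by positivity)
  have hBcont : ContinuousOn B (Set.Icc 0 L) :=
    ((continuousOn_const.mul hnCheck_cont).sub hκ_cont).abs.div_const _
  have hIccU : Set.uIcc (0:ℝ) L = Set.Icc 0 L := Set.uIcc_of_le hL.le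
  have hBII : ∀ a ∈ Set.Icc (0:ℝ) L, ∀ b ∈ Set.Icc (0:ℝ) L,
      IntervalIntegrable B volume a b := by
    intro a ha b hb
    apply (hBcont.mono _).intervalIntegrable
    rw [← hIccU]
    exact Set.uIcc_subset_uIcc (hIccU ▸ ha) (hIccU ▸ hb)
  set φ : ℝ → ℝ := fun x => ∫ ζ in (0:ℝ)..x, B ζ with hφdef
  have hφ0 : φ 0 = 0 := intervalIntegral.integral_same
  have hφcont : ContinuousOn φ (Set.Icc 0 L) := by
    have := intervalIntegral.continuousOn_primitive_interval
      (f := B) (μ := volume) (a := (0:ℝ)) (b := L)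
      (by rw [hIccU]; exact hBcont.integrableOn_Icc)
    rwa [hIccU] at this
  have hφsub : ∀ a ∈ Set.Icc (0:ℝ) L, ∀ b ∈ Set.Icc (0:ℝ) L,
      (∫ ζ in a..b, B ζ) = φ b - φ a := by
    intro a ha b hb
    have h := intervalIntegral.integral_add_adjacent_intervals
      (hBII 0 ⟨le_rfl, hL.le⟩ a ha) (hBII a ha b hb)
    simp only [hφdef]
    linarith [h]
  have hφmono : ∀ a ∈ Set.Icc (0:ℝ) L, ∀ b ∈ Set.Icc (0:ℝ) L, a ≤ b → φ a ≤ φ b := by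
    intro a ha b hb hab
    have h1 : (0:ℝ) ≤ ∫ ζ in a..b, B ζ :=
      intervalIntegral.integral_nonneg hab (fun u _ => hBnn u)
    have := hφsub a ha b hb
    linarith
  have hφder : ∀ ξ ∈ Set.Ioo (0:ℝ) L, HasDerivAt φ (B ξ) ξ := by
    intro ξ hξ
    exact intervalIntegral.integral_hasDerivAt_right
      (hBII 0 ⟨le_rfl, hL.le⟩ ξ ⟨hξ.1.le, hξ.2.le⟩)
      ((hBcont.mono Set.Ioo_subset_Icc_self).stronglyMeasurableAtFilter isOpen_Ioo ξ hξ)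
      (hBcont.continuousAt (Icc_mem_nhds hξ.1 hξ.2))
  -- rewrite the integral in hQ
  set Q : ℝ := A * (∫ η in (0:ℝ)..L, Real.exp (φ L - φ η)) with hQdef
  have hg_cont : ContinuousOn (fun η => Real.exp (φ L - φ η)) (Set.Icc 0 L) :=
    (continuousOn_const.sub hφcont).rexp
  have hQrw : Q = A * (∫ η in (0:ℝ)..L, Real.exp (∫ ζ in η..L, B ζ)) := by
    rw [hQdef]
    congr 1
    apply intervalIntegral.integral_congr
    intro η hη
    rw [hIccU] at hη
    show Real.exp (φ L - φ η) = Real.exp (∫ ζ in η..L, B ζ)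
    rw [hφsub η hη L ⟨hL.le, le_rfl⟩]
  have hQ1 : Q < 1 := by rw [hQrw]; exact hQ
  have hA0 : 0 ≤ A := le_trans (by positivity) (hA 0 ⟨le_rfl, hL.le⟩)
  have hQnn : 0 ≤ Q := by
    rw [hQdef]
    exact mul_nonneg hA0 (intervalIntegral.integral_nonneg hL.le
      (fun u _ => (Real.exp_pos _).le))
  set c : ℝ := (1 - Q) * Real.exp (-(φ L)) / 2 with hcdef
  have hc : 0 < c := by
    apply div_pos (mul_pos (by linarith) (Real.exp_pos _)) two_pos
  set E : ℝ → ℝ := fun x => ε x ^ 2 + β * σ x ^ 2 + c ^ 2 with hEdef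
  have hEpos : ∀ x, 0 < E x := by
    intro x
    have := pow_pos hc 2
    have := mul_nonneg hβ.le (sq_nonneg (σ x))
    simp only [hEdef]
    nlinarith [sq_nonneg (ε x)]
  set r : ℝ → ℝ := fun x => Real.sqrt (E x) with hrdef
  have hrpos : ∀ x, 0 < r x := fun x => Real.sqrt_pos.mpr (hEpos x)
  have hr2 : ∀ x, r x ^ 2 = E x := fun x => Real.sq_sqrt (hEpos x).le
  have hrder : ∀ ξ ∈ Set.Icc (0:ℝ) L, HasDerivAt r
      ((ε ξ * (-(κ ξ) * σ ξ) + β * (σ ξ * (K * l * (nCheck ξ - N₀ + nCheck ξ * ε ξ)))) / r ξ) ξ := by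
    intro ξ hξ
    have hE : HasDerivAt E
        (2 * ε ξ * (-(κ ξ) * σ ξ) + β * (2 * σ ξ * (K * l * (nCheck ξ - N₀ + nCheck ξ * ε ξ)))) ξ := by
      have h1 := ((hε' ξ hξ).pow 2)
      have h2 := (((hσ' ξ hξ).pow 2).const_mul β)
      have := (h1.add h2).add_const (c ^ 2)
      exact this.congr_deriv (by ring)
    have := hE.sqrt (ne_of_gt (hEpos ξ))
    convert this using 1
    have hrne : r ξ ≠ 0 := (hrpos ξ).ne'
    simp only [hrdef] at hrne ⊢
    field_simp
  -- the key differential inequality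
  have hkey : ∀ ξ ∈ Set.Icc (0:ℝ) L,
      (ε ξ * (-(κ ξ) * σ ξ) + β * (σ ξ * (K * l * (nCheck ξ - N₀ + nCheck ξ * ε ξ)))) / r ξ
        ≤ B ξ * r ξ + A := by
    intro ξ hξ
    set e := ε ξ; set s := σ ξ; set n := nCheck ξ; set k := κ ξ; set R := r ξ
    have hR2 : R ^ 2 = e ^ 2 + β * s ^ 2 + c ^ 2 := hr2 ξ
    have hRpos : 0 < R := hrpos ξ
    have hss : (Real.sqrt β * |s|) ^ 2 = β * s ^ 2 := by
      rw [mul_pow, Real.sq_sqrt hβ.le, sq_abs]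
    have h1 : |e * s| ≤ R ^ 2 / (2 * Real.sqrt β) := by
      rw [le_div_iff₀ (by positivity)]
      nlinarith [two_mul_le_add_sq |e| (Real.sqrt β * |s|), hss,
        sq_abs e, abs_mul e s, pow_pos hc 2]
    have hEξ : E ξ = e ^ 2 + β * s ^ 2 + c ^ 2 := rfl
    have h2 : Real.sqrt β * |s| ≤ R := by
      rw [← Real.sqrt_sq_eq_abs, ← Real.sqrt_mul hβ.le]
      exact Real.sqrt_le_sqrt (by rw [hEξ]; nlinarith [sq_nonneg e, pow_pos hc 2])
    have hN : e * (-k * s) + β * (s * (K * l * (n - N₀ + n * e)))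
        = e * s * (β * K * l * n - k) + (K * l * Real.sqrt β * (n - N₀)) * (Real.sqrt β * s) := by
      have h : Real.sqrt β * Real.sqrt β = β := Real.mul_self_sqrt hβ.le
      linear_combination (-(K * l * (n - N₀) * s)) * h
    have t1 : e * s * (β * K * l * n - k) ≤ |e * s| * |β * K * l * n - k| := by
      calc e * s * (β * K * l * n - k) ≤ |e * s * (β * K * l * n - k)| := le_abs_self _
        _ = |e * s| * |β * K * l * n - k| := abs_mul _ _
    have t2 : (K * l * Real.sqrt β * (n - N₀)) * (Real.sqrt β * s)
        ≤ (K * l * Real.sqrt β * |n - N₀|) * (Real.sqrt β * |s|) := by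
      calc (K * l * Real.sqrt β * (n - N₀)) * (Real.sqrt β * s)
          ≤ |(K * l * Real.sqrt β * (n - N₀)) * (Real.sqrt β * s)| := le_abs_self _
        _ = (K * l * Real.sqrt β * |n - N₀|) * (Real.sqrt β * |s|) := by
            rw [abs_mul, abs_mul, abs_mul, abs_mul, abs_mul]
            rw [abs_of_pos hK, abs_of_pos hl, abs_of_pos hsβ]
    have t2' : (K * l * Real.sqrt β * |n - N₀|) * (Real.sqrt β * |s|) ≤ A * R := by
      apply mul_le_mul (hA ξ hξ) h2 (by positivity) hA0
    have t1' : |e * s| * |β * K * l * n - k| ≤ B ξ * R ^ 2 := by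
      have hBval : B ξ = |β * K * l * n - k| / (2 * Real.sqrt β) := rfl
      have hmm : |e * s| * |β * K * l * n - k| ≤ R ^ 2 / (2 * Real.sqrt β) * |β * K * l * n - k| :=
        mul_le_mul_of_nonneg_right h1 (abs_nonneg _)
      have heq : B ξ * R ^ 2 = R ^ 2 / (2 * Real.sqrt β) * |β * K * l * n - k| := by
        rw [hBval]; ring
      linarith
    rw [div_le_iff₀ hRpos]
    calc e * (-k * s) + β * (s * (K * l * (n - N₀ + n * e)))
        = e * s * (β * K * l * n - k) + (K * l * Real.sqrt β * (n - N₀)) * (Real.sqrt β * s) := hN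
      _ ≤ B ξ * R ^ 2 + A * R := by linarith
      _ = (B ξ * R + A) * R := by ring
  -- the auxiliary function ψ
  set ψ : ℝ → ℝ := fun x => ∫ η in (0:ℝ)..x, Real.exp (-(φ η)) with hψdef
  have hexpφcont : ContinuousOn (fun η => Real.exp (-(φ η))) (Set.Icc 0 L) :=
    hφcont.neg.rexp
  have hψ0 : ψ 0 = 0 := intervalIntegral.integral_same
  have hexpII : ∀ a ∈ Set.Icc (0:ℝ) L, ∀ b ∈ Set.Icc (0:ℝ) L,
      IntervalIntegrable (fun η => Real.exp (-(φ η))) volume a b := by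
    intro a ha b hb
    apply (hexpφcont.mono _).intervalIntegrable
    rw [← hIccU]
    exact Set.uIcc_subset_uIcc (hIccU ▸ ha) (hIccU ▸ hb)
  have hψcont : ContinuousOn ψ (Set.Icc 0 L) := by
    have := intervalIntegral.continuousOn_primitive_interval
      (f := fun η => Real.exp (-(φ η))) (μ := volume) (a := (0:ℝ)) (b := L)
      (by rw [hIccU]; exact hexpφcont.integrableOn_Icc)
    rwa [hIccU] at this
  have hψder : ∀ ξ ∈ Set.Ioo (0:ℝ) L, HasDerivAt ψ (Real.exp (-(φ ξ))) ξ := by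
    intro ξ hξ
    exact intervalIntegral.integral_hasDerivAt_right
      (hexpII 0 ⟨le_rfl, hL.le⟩ ξ ⟨hξ.1.le, hξ.2.le⟩)
      ((hexpφcont.mono Set.Ioo_subset_Icc_self).stronglyMeasurableAtFilter isOpen_Ioo ξ hξ)
      (hexpφcont.continuousAt (Icc_mem_nhds hξ.1 hξ.2))
  -- the Gronwall function G
  set G : ℝ → ℝ := fun x => r x * Real.exp (-(φ x)) - A * ψ x with hGdef
  have hGcont : ContinuousOn G (Set.Icc 0 L) := by
    apply ContinuousOn.sub
    · exact ContinuousOn.mul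
        (fun x hx => (hrder x hx).continuousAt.continuousWithinAt) (hφcont.neg.rexp)
    · exact continuousOn_const.mul hψcont
  have hGder : ∀ ξ ∈ Set.Ioo (0:ℝ) L, HasDerivAt G
      (((ε ξ * (-(κ ξ) * σ ξ) + β * (σ ξ * (K * l * (nCheck ξ - N₀ + nCheck ξ * ε ξ)))) / r ξ)
        * Real.exp (-(φ ξ)) + r ξ * (Real.exp (-(φ ξ)) * -(B ξ)) - A * Real.exp (-(φ ξ))) ξ := by
    intro ξ hξ
    have h1 := (hrder ξ (Set.Ioo_subset_Icc_self hξ)).mul ((hφder ξ hξ).neg.exp)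
    exact h1.sub ((hψder ξ hξ).const_mul A)
  have hGd_nonpos : ∀ ξ ∈ Set.Ioo (0:ℝ) L, deriv G ξ ≤ 0 := by
    intro ξ hξ
    rw [(hGder ξ hξ).deriv]
    have hk := hkey ξ (Set.Ioo_subset_Icc_self hξ)
    have hfac : ((ε ξ * (-(κ ξ) * σ ξ) + β * (σ ξ * (K * l * (nCheck ξ - N₀ + nCheck ξ * ε ξ)))) / r ξ)
        * Real.exp (-(φ ξ)) + r ξ * (Real.exp (-(φ ξ)) * -(B ξ)) - A * Real.exp (-(φ ξ))
        = Real.exp (-(φ ξ)) * (((ε ξ * (-(κ ξ) * σ ξ) + β * (σ ξ * (K * l * (nCheck ξ - N₀ + nCheck ξ * ε ξ)))) / r ξ) - (B ξ * r ξ + A)) := by ring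
    rw [hfac]
    exact mul_nonpos_of_nonneg_of_nonpos (Real.exp_pos _).le (by linarith)
  have hGanti : AntitoneOn G (Set.Icc 0 L) := by
    apply antitoneOn_of_deriv_nonpos (convex_Icc 0 L) hGcont
    · intro x hx
      rw [interior_Icc] at hx
      exact (hGder x hx).differentiableAt.differentiableWithinAt
    · intro x hx
      rw [interior_Icc] at hx
      exact hGd_nonpos x hx
  have hG0 : G 0 = c := by
    simp only [hGdef, hrdef, hEdef, hε0, hσ0, hψ0, hφ0, neg_zero, Real.exp_zero,
      mul_one, mul_zero, sub_zero]
    rw [show (0:ℝ) ^ 2 + β * 0 ^ 2 + c ^ 2 = c ^ 2 by ring, Real.sqrt_sq hc.le]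
  -- Gronwall conclusion: for ξ ∈ [0, L], r ξ ≤ (c + A * ψ ξ) * exp (φ ξ)
  have hgron : ∀ ξ ∈ Set.Icc (0:ℝ) L, r ξ ≤ (c + A * ψ ξ) * Real.exp (φ ξ) := by
    intro ξ hξ
    have hGle : G ξ ≤ c := by
      rw [← hG0]
      exact hGanti ⟨le_rfl, hL.le⟩ hξ hξ.1
    have h1 : r ξ * Real.exp (-(φ ξ)) ≤ c + A * ψ ξ := by
      simp only [hGdef] at hGle; linarith
    have h2 := mul_le_mul_of_nonneg_right h1 (Real.exp_pos (φ ξ)).le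
    rwa [mul_assoc, ← Real.exp_add, neg_add_cancel, Real.exp_zero, mul_one] at h2
  -- bound A * ψ ξ * exp (φ ξ) ≤ Q
  have hψbound : ∀ ξ ∈ Set.Icc (0:ℝ) L, A * ψ ξ * Real.exp (φ ξ) ≤ Q := by
    intro ξ hξ
    have hφξL : φ ξ ≤ φ L := hφmono ξ hξ L ⟨hL.le, le_rfl⟩ hξ.2
    have hmul : ψ ξ * Real.exp (φ ξ) = ∫ η in (0:ℝ)..ξ, Real.exp (φ ξ - φ η) := by
      rw [hψdef]
      rw [← intervalIntegral.integral_mul_const]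
      apply intervalIntegral.integral_congr
      intro η hη
      simp only [← Real.exp_add]
      congr 1
      ring
    have hint1 : IntervalIntegrable (fun η => Real.exp (φ ξ - φ η)) volume 0 ξ := by
      apply (((continuousOn_const.sub hφcont).rexp).mono _).intervalIntegrable
      rw [← hIccU]
      exact Set.uIcc_subset_uIcc (hIccU ▸ (Set.mem_Icc.mpr ⟨le_rfl, hL.le⟩)) (hIccU ▸ hξ)
    have hint2 : ∀ a ∈ Set.Icc (0:ℝ) L, ∀ b ∈ Set.Icc (0:ℝ) L,
        IntervalIntegrable (fun η => Real.exp (φ L - φ η)) volume a b := by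
      intro a ha b hb
      apply (hg_cont.mono _).intervalIntegrable
      rw [← hIccU]
      exact Set.uIcc_subset_uIcc (hIccU ▸ ha) (hIccU ▸ hb)
    have hc1 : (∫ η in (0:ℝ)..ξ, Real.exp (φ ξ - φ η))
        ≤ ∫ η in (0:ℝ)..ξ, Real.exp (φ L - φ η) := by
      apply intervalIntegral.integral_mono_on hξ.1 hint1
        (hint2 0 ⟨le_rfl, hL.le⟩ ξ hξ)
      intro u hu
      exact Real.exp_le_exp.mpr (by linarith)
    have hc2 : (∫ η in (0:ℝ)..ξ, Real.exp (φ L - φ η))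
        ≤ ∫ η in (0:ℝ)..L, Real.exp (φ L - φ η) := by
      have hadd := intervalIntegral.integral_add_adjacent_intervals
        (hint2 0 ⟨le_rfl, hL.le⟩ ξ hξ) (hint2 ξ hξ L ⟨hL.le, le_rfl⟩)
      have hnn : (0:ℝ) ≤ ∫ η in ξ..L, Real.exp (φ L - φ η) :=
        intervalIntegral.integral_nonneg hξ.2 (fun u _ => (Real.exp_pos _).le)
      linarith
    calc A * ψ ξ * Real.exp (φ ξ) = A * (ψ ξ * Real.exp (φ ξ)) := by ring
      _ = A * ∫ η in (0:ℝ)..ξ, Real.exp (φ ξ - φ η) := by rw [hmul]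
      _ ≤ A * ∫ η in (0:ℝ)..L, Real.exp (φ L - φ η) := by
          apply mul_le_mul_of_nonneg_left (le_trans hc1 hc2) hA0
      _ = Q := hQdef.symm
  -- conclude
  intro ξ hξ
  have hφξL : φ ξ ≤ φ L := hφmono ξ hξ L ⟨hL.le, le_rfl⟩ hξ.2
  have hεr : |ε ξ| ≤ r ξ := by
    have hEξ : E ξ = ε ξ ^ 2 + β * σ ξ ^ 2 + c ^ 2 := rfl
    rw [← Real.sqrt_sq_eq_abs]
    apply Real.sqrt_le_sqrt
    rw [hEξ]
    have h1 := mul_nonneg hβ.le (sq_nonneg (σ ξ))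
    have h2 := pow_pos hc 2
    linarith
  have hcφ : c * Real.exp (φ ξ) ≤ (1 - Q) / 2 := by
    have : c * Real.exp (φ ξ) ≤ c * Real.exp (φ L) :=
      mul_le_mul_of_nonneg_left (Real.exp_le_exp.mpr hφξL) hc.le
    have hcl : c * Real.exp (φ L) = (1 - Q) / 2 := by
      rw [hcdef]
      rw [div_mul_eq_mul_div, mul_assoc, ← Real.exp_add, neg_add_cancel, Real.exp_zero, mul_one]
    linarith
  have hfinal : r ξ ≤ (1 - Q) / 2 + Q := by
    have h1 := hgron ξ hξ
    have h2 := hψbound ξ hξ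
    have : (c + A * ψ ξ) * Real.exp (φ ξ) = c * Real.exp (φ ξ) + A * ψ ξ * Real.exp (φ ξ) := by ring
    rw [this] at h1
    linarith
  have habs : |ε ξ| < 1 := lt_of_le_of_lt (le_trans hεr hfinal) (by linarith)
  have h := abs_lt.mp habs
  linarith [h.1, h.2]
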